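/- arXiv:1111.4600 — 2 statements merged into one kernel-verified Lean document; each statement's English description precedes it below -/
import Mathlib

section
/- Let A be an irreducible N×N max-plus matrix and write G = G(A). Define B_ms(G) = 2·cd(G) + ep(G) + max_{H a critical component of G} c(H) + max_{H a critical component of G} ep(H) − 1, and μ(A) = sup{ A^{⊗n}_{i,k} − A^{⊗n}_{i,j} : i, j, k nodes of G, n ≥ B_ms(G), A^{⊗n}_{i,j} ≠ −∞ }. Then μ(A) is finite, and, defining for each j ∈ {1,…,N} the vector v^j ∈ ℝ^N by v^j_j = 0 and v^j_k = −μ(A) for k ≠ j, the matrix transient satisfies n_A ≤ max{ B_ms(G), n_{A,v^1}, …, n_{A,v^N} }. -/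
namespace Transients

variable {V : Type*}

/-- A walk of length `n` in the graph with edge relation `E`, given by its node
sequence `p 0, p 1, …, p n`. -/
def IsWalk (E : V → V → Prop) (n : ℕ) (p : ℕ → V) : Prop :=
  ∀ k, k < n → E (p k) (p (k + 1))

/-- A closed walk: start node equals end node. -/
def IsClosedWalk (E : V → V → Prop) (n : ℕ) (p : ℕ → V) : Prop :=
  IsWalk E n p ∧ p 0 = p n

/-- A nonempty elementary closed walk: closed, and no node repeats except start = end. -/
def IsElemClosedWalk (E : V → V → Prop) (n : ℕ) (p : ℕ → V) : Prop :=
  0 < n ∧ IsClosedWalk E n p ∧ ∀ k l, k < n → l < n → p k = p l → k = l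

/-- A simple walk: no node is visited twice. -/
def IsSimpleWalk (E : V → V → Prop) (n : ℕ) (p : ℕ → V) : Prop :=
  IsWalk E n p ∧ ∀ k l, k ≤ n → l ≤ n → p k = p l → k = l

def StronglyConnected (E : V → V → Prop) : Prop :=
  ∀ i j : V, ∃ n p, IsWalk E n p ∧ p 0 = i ∧ p n = j

def NontrivialGraph (E : V → V → Prop) : Prop := ∃ i j, E i j

/-- The weight `w_*` of a walk in an edge-weighted graph. -/
noncomputable def walkWeight (w : V → V → ℝ) (n : ℕ) (p : ℕ → V) : ℝ :=
  ∑ k ∈ Finset.range n, w (p k) (p (k + 1))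

/-- The rate ρ(G): supremum of `w_*(γ)/ℓ(γ)` over nonempty closed walks γ. -/
noncomputable def rate (E : V → V → Prop) (w : V → V → ℝ) : ℝ :=
  sSup {x : ℝ | ∃ n p, 0 < n ∧ IsClosedWalk E n p ∧ x = walkWeight w n p / n}

/-- A critical closed walk: nonempty, closed, and its weight is ρ(G) times its length. -/
def IsCriticalWalk (E : V → V → Prop) (w : V → V → ℝ) (n : ℕ) (p : ℕ → V) : Prop :=
  0 < n ∧ IsClosedWalk E n p ∧ walkWeight w n p = rate E w * n

/-- A critical node: lies on some critical closed walk. -/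
def CriticalNode (E : V → V → Prop) (w : V → V → ℝ) (i : V) : Prop :=
  ∃ n p k, IsCriticalWalk E w n p ∧ k ≤ n ∧ p k = i

/-- A critical edge: lies on some critical closed walk. -/
def CriticalEdge (E : V → V → Prop) (w : V → V → ℝ) (i j : V) : Prop :=
  ∃ n p k, IsCriticalWalk E w n p ∧ k < n ∧ p k = i ∧ p (k + 1) = j

/-- The non-critical rate ρ_nc(G): supremum of mean weights of nonempty closed walks
containing no critical node. -/
noncomputable def ncRate (E : V → V → Prop) (w : V → V → ℝ) : ℝ :=
  sSup {x : ℝ | ∃ n p, 0 < n ∧ IsClosedWalk E n p ∧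
    (∀ k, k ≤ n → ¬ CriticalNode E w (p k)) ∧ x = walkWeight w n p / n}

/-- Δ(G), the maximum edge weight. -/
noncomputable def maxWeight (E : V → V → Prop) (w : V → V → ℝ) : ℝ :=
  sSup {x : ℝ | ∃ i j, E i j ∧ x = w i j}

/-- δ(G), the minimum edge weight. -/
noncomputable def minWeight (E : V → V → Prop) (w : V → V → ℝ) : ℝ :=
  sInf {x : ℝ | ∃ i j, E i j ∧ x = w i j}

open Classical in
/-- Δ_nc(G), the maximum weight of an edge joining two non-critical nodes
(ρ(G) if there is no such edge). -/
noncomputable def maxNcWeight (E : V → V → Prop) (w : V → V → ℝ) : ℝ :=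
  if (∃ i j, E i j ∧ ¬ CriticalNode E w i ∧ ¬ CriticalNode E w j) then
    sSup {x : ℝ | ∃ i j, E i j ∧ ¬ CriticalNode E w i ∧ ¬ CriticalNode E w j ∧ x = w i j}
  else rate E w

/-- `d` is the greatest common divisor of the set `S` of naturals. -/
def IsGcdOf (d : ℕ) (S : Set ℕ) : Prop :=
  (∀ s ∈ S, d ∣ s) ∧ ∀ e : ℕ, (∀ s ∈ S, e ∣ s) → e ∣ d

/-- The set of lengths of nonempty closed walks in the graph. -/
def ClosedLengths (E : V → V → Prop) : Set ℕ :=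
  {n | 0 < n ∧ ∃ p, IsClosedWalk E n p}

/-- The set of lengths of nonempty closed walks starting at `i`. -/
def ClosedLengthsAt (E : V → V → Prop) (i : V) : Set ℕ :=
  {n | 0 < n ∧ ∃ p, IsWalk E n p ∧ p 0 = i ∧ p n = i}

/-- There is a (possibly empty) closed walk of length `n` starting at `i`. -/
def HasClosedWalkAt (E : V → V → Prop) (i : V) (n : ℕ) : Prop :=
  ∃ p, IsWalk E n p ∧ p 0 = i ∧ p n = i

/-- cd(G), the cab driver's diameter: the maximum length of simple walks. -/
noncomputable def cabDiameter (E : V → V → Prop) : ℕ :=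
  sSup {n | ∃ p, IsSimpleWalk E n p}

/-- cr(G), the circumference: the maximum length of nonempty elementary closed walks. -/
noncomputable def circumference (E : V → V → Prop) : ℕ :=
  sSup {n | ∃ p, IsElemClosedWalk E n p}

/-- `g` is the girth of the graph: the minimum length of nonempty elementary closed walks. -/
def IsGirth (E : V → V → Prop) (g : ℕ) : Prop :=
  IsLeast {n | ∃ p, IsElemClosedWalk E n p} g

/-- `ep` is the exploration penalty of a graph of cyclicity `c`: the least `m` such that
for every node `i` and every multiple `n` of `c` with `n ≥ m` there is a closed walk
of length `n` starting at `i`. -/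
def IsEp (E : V → V → Prop) (c ep : ℕ) : Prop :=
  IsLeast {m | ∀ i : V, ∀ n : ℕ, c ∣ n → m ≤ n → HasClosedWalkAt E i n} ep

/-- `i` and `j` lie in the same strongly connected component of the graph. -/
def SameComp (E : V → V → Prop) (i j : V) : Prop :=
  (∃ n p, IsWalk E n p ∧ p 0 = i ∧ p n = j) ∧ (∃ n p, IsWalk E n p ∧ p 0 = j ∧ p n = i)

/-- `m` is the exploration penalty of the strongly connected component of `k`
(a component of cyclicity `c`). -/
def IsCompEp (E : V → V → Prop) (k : V) (c m : ℕ) : Prop :=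
  IsLeast {m' | ∀ i : V, SameComp E k i → ∀ n : ℕ, c ∣ n → m' ≤ n → HasClosedWalkAt E i n} m

/-- Max-plus matrix product. -/
noncomputable def mpMul {N : ℕ} (A B : Matrix (Fin N) (Fin N) (WithBot ℝ)) :
    Matrix (Fin N) (Fin N) (WithBot ℝ) :=
  fun i j => Finset.univ.sup fun k => A i k + B k j

/-- Max-plus matrix power, `A^{⊗n}`. -/
noncomputable def mpPow {N : ℕ} (A : Matrix (Fin N) (Fin N) (WithBot ℝ)) :
    ℕ → Matrix (Fin N) (Fin N) (WithBot ℝ)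
  | 0 => fun i j => if i = j then (0 : WithBot ℝ) else ⊥
  | n + 1 => mpMul A (mpPow A n)

/-- Max-plus matrix-vector product. -/
noncomputable def mpVec {N : ℕ} (A : Matrix (Fin N) (Fin N) (WithBot ℝ))
    (v : Fin N → WithBot ℝ) : Fin N → WithBot ℝ :=
  fun i => Finset.univ.sup fun j => A i j + v j

/-- The edge relation of the weighted graph `G(A)`. -/
def mEdge {N : ℕ} (A : Matrix (Fin N) (Fin N) (WithBot ℝ)) : Fin N → Fin N → Prop :=
  fun i j => A i j ≠ ⊥

/-- The edge weights of the weighted graph `G(A)`. -/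
noncomputable def mWeight {N : ℕ} (A : Matrix (Fin N) (Fin N) (WithBot ℝ)) :
    Fin N → Fin N → ℝ :=
  fun i j => WithBot.unbotD 0 (A i j)

/-- `A` is irreducible: `G(A)` is strongly connected and has at least one edge. -/
def MPIrreducible {N : ℕ} (A : Matrix (Fin N) (Fin N) (WithBot ℝ)) : Prop :=
  StronglyConnected (mEdge A) ∧ NontrivialGraph (mEdge A)

/-- The linear max-plus system `x(n) = A^{⊗n} ⊗ v`. -/
noncomputable def mpSystem {N : ℕ} (A : Matrix (Fin N) (Fin N) (WithBot ℝ)) (v : Fin N → ℝ)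
    (n : ℕ) : Fin N → WithBot ℝ :=
  mpVec (mpPow A n) fun j => (v j : WithBot ℝ)

/-- The set of indices from which the system `x_{A,v}` is periodic with increment
`p·ρ(A)`; its least element is the transient `n_{A,v}`. -/
noncomputable def SysTransientSet {N : ℕ} (A : Matrix (Fin N) (Fin N) (WithBot ℝ))
    (v : Fin N → ℝ) : Set ℕ :=
  {n₀ | ∃ p : ℕ, 0 < p ∧ ∀ n, n₀ ≤ n → ∀ i,
    mpSystem A v (n + p) i
      = mpSystem A v n i + ((p * rate (mEdge A) (mWeight A) : ℝ) : WithBot ℝ)}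

/-- The set of indices from which the powers of `A` are periodic with increment
`p·ρ(A)`; its least element is the transient `n_A`. -/
noncomputable def MatTransientSet {N : ℕ} (A : Matrix (Fin N) (Fin N) (WithBot ℝ)) : Set ℕ :=
  {n₀ | ∃ p : ℕ, 0 < p ∧ ∀ n, n₀ ≤ n → ∀ i j,
    mpPow A (n + p) i j
      = mpPow A n i j + ((p * rate (mEdge A) (mWeight A) : ℝ) : WithBot ℝ)}

/-- `‖v‖ = max_i v_i − min_i v_i`. -/
noncomputable def vnorm {N : ℕ} (v : Fin N → ℝ) : ℝ :=
  sSup (Set.range v) - sInf (Set.range v)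


/-- The set of real differences `A^{⊗n}_{i,k} − A^{⊗n}_{i,j}` over all nodes `i,j,k`
and all `n ≥ B − 1` (stated as `B ≤ n + 1`) with `A^{⊗n}_{i,j} ≠ −∞` (the entries
with `A^{⊗n}_{i,k} = −∞` contribute `−∞` and are irrelevant for the supremum);
`μ(A)` is its supremum. -/
def muSet {N : ℕ} (A : Matrix (Fin N) (Fin N) (WithBot ℝ)) (B : ℕ) : Set ℝ :=
  {x : ℝ | ∃ (i j k : Fin N) (n : ℕ), B ≤ n + 1 ∧ ∃ a b : ℝ,
    mpPow A n i k = (a : WithBot ℝ) ∧ mpPow A n i j = (b : WithBot ℝ) ∧ x = a - b}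

section Aux

variable {E : V → V → Prop} {w : V → V → ℝ} {m n : ℕ} {p q : ℕ → V}

def cat (m : ℕ) (p q : ℕ → V) : ℕ → V := fun t => if t < m then p t else q (t - m)

lemma cat_zero (h : p m = q 0) : cat m p q 0 = p 0 := by
  unfold cat
  rcases Nat.eq_zero_or_pos m with hm | hm
  · subst hm; simpa using h.symm
  · simp [hm]

lemma cat_last (m n : ℕ) (p q : ℕ → V) : cat m p q (m + n) = q n := by
  unfold cat
  rw [if_neg (by omega)]
  congr 1
  omega

lemma cat_apply_lt {t : ℕ} (ht : t < m) : cat m p q t = p t := if_pos ht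

lemma cat_apply_le {t : ℕ} (h : p m = q 0) (ht : t ≤ m) : cat m p q t = p t := by
  rcases lt_or_eq_of_le ht with ht' | ht'
  · exact if_pos ht'
  · subst ht'; unfold cat; rw [if_neg (by omega)]; simpa using h.symm

lemma cat_apply_ge {t : ℕ} (ht : m ≤ t) : cat m p q t = q (t - m) := if_neg (by omega)

lemma cat_walk (hm : IsWalk E m p) (hn : IsWalk E n q) (h : p m = q 0) :
    IsWalk E (m + n) (cat m p q) := by
  intro t ht
  by_cases h2 : t < m
  · rw [cat_apply_lt h2, cat_apply_le h (by omega)]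
    exact hm t h2
  · push_neg at h2
    rw [cat_apply_ge h2, cat_apply_ge (by omega)]
    have : t + 1 - m = (t - m) + 1 := by omega
    rw [this]
    exact hn (t - m) (by omega)

lemma cat_weight (h : p m = q 0) :
    walkWeight w (m + n) (cat m p q) = walkWeight w m p + walkWeight w n q := by
  unfold walkWeight
  rw [Finset.sum_range_add]
  congr 1
  · refine Finset.sum_congr rfl fun t ht => ?_
    rw [Finset.mem_range] at ht
    rw [cat_apply_lt ht, cat_apply_le h (by omega)]
  · refine Finset.sum_congr rfl fun t ht => ?_
    rw [Finset.mem_range] at ht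
    rw [cat_apply_ge (by omega), cat_apply_ge (by omega)]
    congr 2 <;> omega

/-- Surgery: removing a cycle from a walk. -/
lemma surgery {k l : ℕ} (hw : IsWalk E n p) (hkl : k < l) (hln : l ≤ n) (hpl : p k = p l) :
    ∃ p', IsWalk E (n - (l - k)) p' ∧ p' 0 = p 0 ∧ p' (n - (l - k)) = p n ∧
      walkWeight w n p
        = walkWeight w (n - (l - k)) p' + walkWeight w (l - k) (fun t => p (k + t)) ∧
      IsClosedWalk E (l - k) (fun t => p (k + t)) := by
  refine ⟨fun t => if t < k then p t else p (t + (l - k)), ?_, ?_, ?_, ?_, ?_, ?_⟩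
  · intro t ht
    show E (if t < k then p t else p (t + (l - k)))
      (if t + 1 < k then p (t + 1) else p (t + 1 + (l - k)))
    by_cases h2 : t + 1 < k
    · rw [if_pos (by omega), if_pos h2]
      exact hw t (by omega)
    · by_cases h3 : t < k
      · have hk' : t + 1 = k := by omega
        rw [if_pos h3, if_neg h2]
        have he : p (t + 1 + (l - k)) = p (t + 1) := by
          have h4 : t + 1 + (l - k) = l := by omega
          rw [h4, hk', hpl]
        rw [he]
        exact hw t (by omega)
      · rw [if_neg h3, if_neg (by omega)]
        have h4 : t + 1 + (l - k) = (t + (l - k)) + 1 := by omega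
        rw [h4]
        exact hw (t + (l - k)) (by omega)
  · show (if 0 < k then p 0 else p (0 + (l - k))) = p 0
    by_cases h0 : 0 < k
    · rw [if_pos h0]
    · rw [if_neg h0]
      have hk0 : k = 0 := by omega
      have h4 : 0 + (l - k) = l := by omega
      rw [h4, ← hpl, hk0]
  · show (if n - (l - k) < k then p (n - (l - k)) else p (n - (l - k) + (l - k))) = p n
    rw [if_neg (by omega)]
    congr 1
    omega
  · show walkWeight w n p = walkWeight w (n - (l - k))
        (fun t => if t < k then p t else p (t + (l - k))) + _
    unfold walkWeight
    have hsplit : n = k + ((l - k) + (n - l)) := by omega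
    have hsplit2 : n - (l - k) = k + (n - l) := by omega
    rw [hsplit2, Finset.sum_range_add]
    conv_lhs => rw [hsplit, Finset.sum_range_add, Finset.sum_range_add]
    have e1 : ∀ t ∈ Finset.range k,
        w (p t) (p (t+1))
          = w (if t < k then p t else p (t + (l - k)))
              (if t+1 < k then p (t+1) else p (t+1+(l - k))) := by
      intro t ht
      rw [Finset.mem_range] at ht
      by_cases h2 : t + 1 < k
      · rw [if_pos ht, if_pos h2]
      · rw [if_pos ht, if_neg h2]
        congr 1
        have h4 : t + 1 + (l - k) = l := by omega
        have hk' : t + 1 = k := by omega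
        rw [h4, hk', hpl]
    have e2 : ∀ t ∈ Finset.range (n - l),
        w (p (k + ((l - k) + t))) (p (k + ((l - k) + t) + 1))
          = w (if k + t < k then p (k+t) else p (k+t+(l - k)))
              (if k + t + 1 < k then p (k+t+1) else p (k+t+1+(l - k))) := by
      intro t ht
      rw [if_neg (by omega), if_neg (by omega)]
      congr 2 <;> omega
    rw [Finset.sum_congr rfl e1, Finset.sum_congr rfl e2]
    have e3 : ∀ t ∈ Finset.range (l - k),
        w (p (k + t)) (p (k + (t + 1))) = w (p (k + t)) (p (k + t + 1)) := by
      intro t _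
      congr 1 <;> omega
    rw [Finset.sum_congr rfl e3]
    ring
  · intro t ht
    show E (p (k + t)) (p (k + (t + 1)))
    have h4 : k + (t + 1) = (k + t) + 1 := by omega
    rw [h4]
    exact hw (k + t) (by omega)
  · show p (k + 0) = p (k + (l - k))
    have h4 : k + (l - k) = l := by omega
    rw [h4, Nat.add_zero, hpl]

/-- Extraction of a simple walk, keeping track of divisibility of the removed length. -/
lemma extraction (c : ℕ) (hdvd : ∀ m q, 0 < m → IsClosedWalk E m q → c ∣ m) :
    ∀ n p, IsWalk E n p → ∃ ℓ p', ℓ ≤ n ∧ c ∣ (n - ℓ) ∧ IsSimpleWalk E ℓ p' ∧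
      p' 0 = p 0 ∧ p' ℓ = p n := by
  intro n
  induction n using Nat.strong_induction_on with
  | _ n ih =>
    intro p hp
    by_cases hrep : ∃ k l, k < l ∧ l ≤ n ∧ p k = p l
    · obtain ⟨k, l, hkl, hln, hpl⟩ := hrep
      obtain ⟨p', hw', h0', hn', -, hclosed⟩ := surgery (w := fun _ _ => 0) hp hkl hln hpl
      have hd : 0 < l - k := by omega
      have hlt : n - (l - k) < n := by omega
      obtain ⟨ℓ, p'', hle, hdv, hs, h0, hn2⟩ := ih (n - (l - k)) hlt p' hw'
      refine ⟨ℓ, p'', by omega, ?_, hs, by rw [h0, h0'], by rw [hn2, hn']⟩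
      have h1 : c ∣ (l - k) := hdvd _ _ hd hclosed
      have : n - ℓ = (n - (l - k) - ℓ) + (l - k) := by omega
      rw [this]
      exact Nat.dvd_add hdv h1
    · push_neg at hrep
      refine ⟨n, p, le_rfl, by simp, ⟨hp, ?_⟩, rfl, rfl⟩
      intro k l hk hl hpe
      rcases lt_trichotomy k l with h | h | h
      · exact absurd hpe (hrep k l h hl)
      · exact h
      · exact absurd hpe.symm (hrep l k h hk)

/-- Rotation of a closed walk. -/
lemma rotation (hp : IsWalk E n p) (hc : p 0 = p n) {k : ℕ} (hk : k ≤ n) (hn : 0 < n) :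
    ∃ p', IsWalk E n p' ∧ p' 0 = p k ∧ p' n = p k := by
  have key : ∀ a, p ((a + 1) % n) = p (a % n + 1) := by
    intro a
    have h1 : (a % n + 1) % n = (a + 1) % n := Nat.mod_add_mod a n 1
    have h2 : a % n < n := Nat.mod_lt _ hn
    rcases Nat.lt_or_ge (a % n + 1) n with h3 | h3
    · rw [← h1, Nat.mod_eq_of_lt h3]
    · have h4 : a % n + 1 = n := by omega
      rw [← h1, h4, Nat.mod_self, hc]
  have hkmod : p (k % n) = p k := by
    rcases lt_or_eq_of_le hk with h | h
    · rw [Nat.mod_eq_of_lt h]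
    · subst h; rw [Nat.mod_self, hc]
  refine ⟨fun t => p ((k + t) % n), ?_, ?_, ?_⟩
  · intro t ht
    have := key (k + t)
    show E (p ((k + t) % n)) (p ((k + t + 1) % n))
    rw [this]
    exact hp _ (Nat.mod_lt _ hn)
  · simpa using hkmod
  · show p ((k + n) % n) = p k
    rw [Nat.add_mod_right]
    exact hkmod

lemma walkWeight_abs_le (W : ℝ) (hW : ∀ i j : V, |w i j| ≤ W) (n : ℕ) (p : ℕ → V) :
    |walkWeight w n p| ≤ n * W := by
  calc |walkWeight w n p| ≤ ∑ k ∈ Finset.range n, |w (p k) (p (k+1))| :=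
        Finset.abs_sum_le_sum_abs _ _
    _ ≤ ∑ _k ∈ Finset.range n, W := Finset.sum_le_sum fun k _ => hW _ _
    _ = n * W := by simp [mul_comm]

end Aux

section Aux2

variable {E : V → V → Prop} {w : V → V → ℝ}

lemma walk_weight_upper {W D ρ' : ℝ}
    (hW : ∀ i j, |w i j| ≤ W)
    (hρub : ρ' ≤ W) (hρlb : -W ≤ ρ')
    (hmean : ∀ m q, 0 < m → IsClosedWalk E m q → walkWeight w m q ≤ ρ' * m)
    (hsimple : ∀ m q, IsSimpleWalk E m q → (m : ℝ) ≤ D) :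
    ∀ n p, IsWalk E n p → walkWeight w n p ≤ ρ' * n + 2 * W * D := by
  intro n
  induction n using Nat.strong_induction_on with
  | _ n ih =>
    intro p hp
    by_cases hrep : ∃ k l, k < l ∧ l ≤ n ∧ p k = p l
    · obtain ⟨k, l, hkl, hln, hpl⟩ := hrep
      obtain ⟨p', hw', h0', hn', hwt, hcl⟩ := surgery (w := w) hp hkl hln hpl
      have h1 := ih (n - (l - k)) (by omega) p' hw'
      have h2 := hmean (l - k) _ (by omega) hcl
      have hcast : ((n - (l - k) : ℕ) : ℝ) = (n : ℝ) - ((l - k : ℕ) : ℝ) :=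
        Nat.cast_sub (by omega)
      rw [hcast] at h1
      rw [hwt]
      linarith [h1, h2]
    · push_neg at hrep
      have hs : IsSimpleWalk E n p := ⟨hp, fun k l hk hl hpe => by
        rcases lt_trichotomy k l with h|h|h
        · exact absurd hpe (hrep k l h hl)
        · exact h
        · exact absurd hpe.symm (hrep l k h hk)⟩
      have h1 := hsimple n p hs
      have h2 := (abs_le.1 (walkWeight_abs_le W hW n p)).2
      have h3 : (n:ℝ)*(W-ρ') ≤ D*(W-ρ') :=
        mul_le_mul_of_nonneg_right h1 (by linarith)
      have hD0 : (0:ℝ) ≤ D := le_trans (Nat.cast_nonneg n) h1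
      have h4 : D*(W-ρ') ≤ D*(2*W) := by nlinarith
      nlinarith [h2, h3, h4]

lemma repeat_closed {q : ℕ} {γ : ℕ → V} (hγ : IsWalk E q γ) (hc : γ 0 = γ q) :
    ∀ s : ℕ, ∃ p, IsWalk E (s * q) p ∧ p 0 = γ 0 ∧ p (s * q) = γ 0 ∧
      walkWeight w (s * q) p = s * walkWeight w q γ := by
  intro s
  induction s with
  | zero =>
    refine ⟨fun _ => γ 0, fun k hk => absurd hk (by omega), rfl, by norm_num, ?_⟩
    simp [walkWeight]
  | succ s ih =>
    obtain ⟨P, hP, h0, hend, hwt⟩ := ih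
    have hjoin : P (s * q) = γ 0 := hend
    refine ⟨cat (s * q) P γ, ?_, ?_, ?_, ?_⟩
    · have := cat_walk hP hγ hjoin
      have hm : (s + 1) * q = s * q + q := by ring
      rw [hm]
      exact this
    · rw [cat_zero hjoin, h0]
    · have hm : (s + 1) * q = s * q + q := by ring
      rw [hm, cat_last, ← hc]
    · have hm : (s + 1) * q = s * q + q := by ring
      rw [hm, cat_weight hjoin, hwt]
      push_cast
      ring

lemma iterate_periodic (f : ℕ → WithBot ℝ) (n₀ t : ℕ) (c : ℝ)
    (h : ∀ n, n₀ ≤ n → f (n + t) = f n + (c : WithBot ℝ)) :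
    ∀ s n, n₀ ≤ n → f (n + s * t) = f n + ((s * c : ℝ) : WithBot ℝ) := by
  intro s
  induction s with
  | zero => intro n hn; simp
  | succ s ih =>
    intro n hn
    have h1 : n + (s + 1) * t = (n + s * t) + t := by ring
    rw [h1, h (n + s * t) (by omega), ih n hn]
    rw [add_assoc, ← WithBot.coe_add]
    congr 2
    push_cast
    ring

end Aux2

section Mat

variable {N : ℕ} {A : Matrix (Fin N) (Fin N) (WithBot ℝ)}

lemma mEdge_coe {i j : Fin N} (h : mEdge A i j) :
    A i j = (mWeight A i j : WithBot ℝ) := by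
  obtain ⟨x, hx⟩ := WithBot.ne_bot_iff_exists.1 h
  rw [← hx]
  simp [mWeight, ← hx]

lemma weight_le_pow {n : ℕ} {p : ℕ → Fin N} (hp : IsWalk (mEdge A) n p) :
    ((walkWeight (mWeight A) n p : ℝ) : WithBot ℝ) ≤ mpPow A n (p 0) (p n) := by
  induction n generalizing p with
  | zero =>
    have h1 : walkWeight (mWeight A) 0 p = 0 := by simp [walkWeight]
    have h2 : mpPow A 0 (p 0) (p 0) = (0 : WithBot ℝ) := by simp [mpPow]
    rw [h1, h2]
    norm_num
  | succ n ih =>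
    have h0 : mEdge A (p 0) (p 1) := hp 0 (by omega)
    have hshift : IsWalk (mEdge A) n (fun t => p (t+1)) := fun t ht => hp (t+1) (by omega)
    have hw : walkWeight (mWeight A) (n+1) p
        = mWeight A (p 0) (p 1) + walkWeight (mWeight A) n (fun t => p (t+1)) := by
      unfold walkWeight
      rw [Finset.sum_range_succ']
      ring
    calc ((walkWeight (mWeight A) (n+1) p : ℝ) : WithBot ℝ)
        = (mWeight A (p 0) (p 1) : WithBot ℝ)
          + ((walkWeight (mWeight A) n (fun t => p (t+1)) : ℝ) : WithBot ℝ) := by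
          rw [hw]; push_cast; rfl
      _ ≤ A (p 0) (p 1) + mpPow A n (p 1) (p (n+1)) :=
          add_le_add (le_of_eq (mEdge_coe h0).symm) (ih hshift)
      _ ≤ mpPow A (n+1) (p 0) (p (n+1)) := by
          simp only [mpPow, mpMul]
          exact Finset.le_sup (f := fun k => A (p 0) k + mpPow A n k (p (n+1)))
            (Finset.mem_univ (p 1))

lemma pow_eq_weight {n : ℕ} {i j : Fin N} {b : ℝ} (h : mpPow A n i j = (b : WithBot ℝ)) :
    ∃ p, IsWalk (mEdge A) n p ∧ p 0 = i ∧ p n = j ∧ walkWeight (mWeight A) n p = b := by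
  induction n generalizing i b with
  | zero =>
    by_cases hij : i = j
    · subst hij
      rw [show mpPow A 0 i i = (0 : WithBot ℝ) from by simp [mpPow]] at h
      refine ⟨fun _ => i, fun k hk => absurd hk (by omega), rfl, rfl, ?_⟩
      have hb : (0:ℝ) = b := by exact_mod_cast h
      simp [walkWeight, ← hb]
    · rw [show mpPow A 0 i j = (⊥ : WithBot ℝ) from by simp [mpPow, hij]] at h
      exact absurd h.symm (by simp)
  | succ n ih =>
    have hN : (Finset.univ : Finset (Fin N)).Nonempty := ⟨i, Finset.mem_univ i⟩
    simp only [mpPow, mpMul] at h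
    obtain ⟨k, -, hk⟩ := Finset.exists_mem_eq_sup Finset.univ hN
      (fun k => A i k + mpPow A n k j)
    rw [h] at hk
    have hAik : A i k ≠ ⊥ := by
      intro hbot
      rw [hbot, WithBot.bot_add] at hk
      exact absurd hk (by simp)
    have hpow : mpPow A n k j ≠ ⊥ := by
      intro hbot
      rw [hbot, WithBot.add_bot] at hk
      exact absurd hk (by simp)
    obtain ⟨c, hc⟩ := WithBot.ne_bot_iff_exists.1 hpow
    obtain ⟨p', hp', h0', hn', hwt'⟩ := ih hc.symm
    have hb : b = mWeight A i k + c := by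
      rw [mEdge_coe hAik, ← hc, ← WithBot.coe_add] at hk
      exact_mod_cast hk
    refine ⟨fun t => if t = 0 then i else p' (t - 1), ?_, by simp, by simp [hn'], ?_⟩
    · intro t ht
      rcases Nat.eq_zero_or_pos t with ht0 | ht0
      · subst ht0
        simp only [if_pos rfl, if_neg (Nat.one_ne_zero)]
        show mEdge A i (p' 0)
        rw [h0']
        exact hAik
      · show mEdge A (if t = 0 then i else p' (t-1)) (if t + 1 = 0 then i else p' (t+1-1))
        have e1 : (if t = 0 then i else p' (t-1)) = p' (t-1) := if_neg (by omega)
        have e2 : (if t + 1 = 0 then i else p' (t+1-1)) = p' ((t-1)+1) := by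
          rw [if_neg (by omega)]
          congr 1
          omega
        rw [e1, e2]
        exact hp' (t-1) (by omega)
    · simp only [walkWeight]
      rw [Finset.sum_range_succ']
      have e1 : ∀ t ∈ Finset.range n,
          mWeight A (if t + 1 = 0 then i else p' (t+1-1)) (if t+1+1 = 0 then i else p' (t+1+1-1))
            = mWeight A (p' t) (p' (t+1)) := by
        intro t _
        rw [if_neg (by omega), if_neg (by omega)]
        congr 2 <;> omega
      rw [Finset.sum_congr rfl e1]
      have e2 : (if (0:ℕ) = 0 then i else p' (0-1)) = i := if_pos rfl
      have e3 : (if (0:ℕ)+1 = 0 then i else p' (0+1-1)) = p' 0 := if_neg (by omega)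
      rw [e2, e3, h0', hb]
      have e4 : ∑ t ∈ Finset.range n, mWeight A (p' t) (p' (t+1)) = c := hwt'
      rw [e4]
      ring

lemma pow_ne_bot_of_walk {n : ℕ} {p : ℕ → Fin N} (hp : IsWalk (mEdge A) n p) :
    mpPow A n (p 0) (p n) ≠ ⊥ :=
  fun hbot => absurd (hbot ▸ weight_le_pow hp) (by simp)

end Mat


/-- `μ(A)` is finite (the defining set is bounded above), and with
`v^j` the vector with `v^j_j = 0` and `v^j_k = −μ(A)` otherwise, the matrix transient
satisfies `n_A ≤ max{B_ms(G), n_{A,v¹}, …, n_{A,v^N}}`, where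
`B_ms(G) = 2·cd(G) + ep(G) + max_H c(H) + max_H ep(H) − 1`
(the inequality is stated in `ℤ` to avoid natural-number truncation). -/
theorem stmt_18 {N : ℕ} (A : Matrix (Fin N) (Fin N) (WithBot ℝ)) (hA : MPIrreducible A)
    (cG epG : ℕ) (hcG : IsGcdOf cG (ClosedLengths (mEdge A)))
    (hepG : IsEp (mEdge A) cG epG)
    (dmax : ℕ)
    (hdmax : IsGreatest {c : ℕ | ∃ k : Fin N, CriticalNode (mEdge A) (mWeight A) k ∧
      IsGcdOf c (ClosedLengthsAt (CriticalEdge (mEdge A) (mWeight A)) k)} dmax)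
    (epmax : ℕ)
    (hepmax : IsGreatest {m : ℕ | ∃ (k : Fin N) (c : ℕ),
      CriticalNode (mEdge A) (mWeight A) k ∧
      IsGcdOf c (ClosedLengthsAt (CriticalEdge (mEdge A) (mWeight A)) k) ∧
      IsCompEp (CriticalEdge (mEdge A) (mWeight A)) k c m} epmax) :
    BddAbove (muSet A (2 * cabDiameter (mEdge A) + epG + dmax + epmax)) ∧
    ∀ (nA : ℕ) (nAv : Fin N → ℕ),
      IsLeast (MatTransientSet A) nA →
      (∀ j : Fin N, IsLeast (SysTransientSet A
        (fun k => if k = j then (0 : ℝ)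
          else - sSup (muSet A (2 * cabDiameter (mEdge A) + epG + dmax + epmax))))
        (nAv j)) →
      (nA : ℤ) ≤ max
        (2 * (cabDiameter (mEdge A) : ℤ) + (epG : ℤ) + (dmax : ℤ) + (epmax : ℤ) - 1)
        ((Finset.univ.sup nAv : ℕ) : ℤ) := by
  classical
  obtain ⟨hSC, i₀, j₀, hedge⟩ := hA
  have hNe : Nonempty (Fin N) := ⟨i₀⟩
  -- a universal bound on edge weights
  obtain ⟨W, hW⟩ : ∃ W, ∀ i j, |mWeight A i j| ≤ W :=
    ⟨Finset.univ.sup' Finset.univ_nonempty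
        (fun pr : Fin N × Fin N => |mWeight A pr.1 pr.2|),
      fun i j => Finset.le_sup' (fun pr : Fin N × Fin N => |mWeight A pr.1 pr.2|) (Finset.mem_univ (i, j))⟩
  have hW0 : (0:ℝ) ≤ W := le_trans (abs_nonneg _) (hW i₀ j₀)
  -- a closed walk at i₀
  obtain ⟨m₀, r₀, hr₀, hr00, hr0m⟩ := hSC j₀ i₀
  have hpe : IsWalk (mEdge A) 1 (fun t => if t = 0 then i₀ else j₀) := by
    intro k hk
    have hk0 : k = 0 := by omega
    subst hk0
    simpa using hedge
  have hpe1 : (fun t : ℕ => if t = 0 then i₀ else j₀) 1 = r₀ 0 := by simp [hr00]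
  have hc₀w : IsWalk (mEdge A) (1 + m₀) (cat 1 (fun t => if t = 0 then i₀ else j₀) r₀) :=
    cat_walk hpe hr₀ hpe1
  have hc₀0 : cat 1 (fun t : ℕ => if t = 0 then i₀ else j₀) r₀ 0 = i₀ := by
    rw [cat_zero hpe1]
    simp
  have hc₀e : cat 1 (fun t : ℕ => if t = 0 then i₀ else j₀) r₀ (1 + m₀) = i₀ := by
    rw [cat_last]; exact hr0m
  have hclosed₀ : IsClosedWalk (mEdge A) (1 + m₀)
      (cat 1 (fun t : ℕ => if t = 0 then i₀ else j₀) r₀) := ⟨hc₀w, by rw [hc₀0, hc₀e]⟩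
  have hmem₀ : (1 + m₀) ∈ ClosedLengths (mEdge A) := ⟨by omega, _, hclosed₀⟩
  have hcGpos : 0 < cG := by
    rcases Nat.eq_zero_or_pos cG with h | h
    · have h2 := hcG.1 _ hmem₀
      rw [h] at h2
      have := Nat.eq_zero_of_zero_dvd h2
      omega
    · exact h
  -- rate facts
  have hub0 : ∀ x ∈ {x : ℝ | ∃ n p, 0 < n ∧ IsClosedWalk (mEdge A) n p ∧
      x = walkWeight (mWeight A) n p / n}, x ≤ W := by
    rintro x ⟨m, qq, hm, hq, rfl⟩
    rw [div_le_iff₀ (by exact_mod_cast hm)]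
    have h2 := (abs_le.1 (walkWeight_abs_le W hW m qq)).2
    linarith
  have hSetNe : {x : ℝ | ∃ n p, 0 < n ∧ IsClosedWalk (mEdge A) n p ∧
      x = walkWeight (mWeight A) n p / n}.Nonempty :=
    ⟨_, ⟨1 + m₀, _, by omega, hclosed₀, rfl⟩⟩
  have hSetBdd : BddAbove {x : ℝ | ∃ n p, 0 < n ∧ IsClosedWalk (mEdge A) n p ∧
      x = walkWeight (mWeight A) n p / n} := ⟨W, hub0⟩
  have hmean : ∀ m qq, 0 < m → IsClosedWalk (mEdge A) m qq →
      walkWeight (mWeight A) m qq ≤ rate (mEdge A) (mWeight A) * m := by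
    intro m qq hm hq
    have h1 : walkWeight (mWeight A) m qq / (m:ℝ) ≤ rate (mEdge A) (mWeight A) := le_csSup hSetBdd ⟨m, qq, hm, hq, rfl⟩
    rw [div_le_iff₀ (by exact_mod_cast hm)] at h1
    exact h1
  have hρub : rate (mEdge A) (mWeight A) ≤ W := csSup_le hSetNe hub0
  have hρlb : -W ≤ rate (mEdge A) (mWeight A) := by
    have h1 : -W ≤ walkWeight (mWeight A) (1 + m₀)
        (cat 1 (fun t : ℕ => if t = 0 then i₀ else j₀) r₀) / ((1 + m₀ : ℕ) : ℝ) := by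
      rw [le_div_iff₀ (by exact_mod_cast Nat.add_pos_left Nat.one_pos m₀)]
      have h2 := (abs_le.1 (walkWeight_abs_le W hW (1 + m₀)
        (cat 1 (fun t : ℕ => if t = 0 then i₀ else j₀) r₀))).1
      push_cast at h2 ⊢
      nlinarith
    exact le_trans h1 (le_csSup hSetBdd ⟨1 + m₀, _, by omega, hclosed₀, rfl⟩)
  -- cab diameter facts
  have hsimple_le : ∀ m qq, IsSimpleWalk (mEdge A) m qq → m ≤ cabDiameter (mEdge A) := by
    intro m qq hq
    have hbdd : BddAbove {n | ∃ p, IsSimpleWalk (mEdge A) n p} := by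
      refine ⟨N, fun s hs => ?_⟩
      obtain ⟨p, hp, hinj⟩ := hs
      have hinj2 : Function.Injective (fun t : Fin (s + 1) => p t) := by
        intro a b hab
        exact Fin.ext (hinj a b (by omega) (by omega) hab)
      have hcard := Fintype.card_le_of_injective _ hinj2
      simp only [Fintype.card_fin] at hcard
      omega
    exact le_csSup hbdd ⟨qq, hq⟩
  have hdvdE : ∀ m qq, 0 < m → IsClosedWalk (mEdge A) m qq → cG ∣ m :=
    fun m qq hm hq => hcG.1 m ⟨hm, qq, hq⟩
  have hdvdclosed : ∀ (m : ℕ) (pp : ℕ → Fin N), IsWalk (mEdge A) m pp → pp 0 = pp m →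
      cG ∣ m := by
    intro m pp h1 h2
    rcases Nat.eq_zero_or_pos m with h | h
    · simp [h]
    · exact hdvdE m pp h ⟨h1, h2⟩
  have hextract := extraction (E := mEdge A) cG hdvdE
  -- critical walk
  obtain ⟨kc, hkcrit, hkgcd⟩ := hdmax.1
  obtain ⟨q, γ, t₀, hγcrit, ht₀, hγt₀⟩ := hkcrit
  have hqpos : 0 < q := hγcrit.1
  have hγclosed : IsClosedWalk (mEdge A) q γ := hγcrit.2.1
  have hγw : walkWeight (mWeight A) q γ = rate (mEdge A) (mWeight A) * q := hγcrit.2.2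
  have hγwalk : IsWalk (mEdge A) q γ := hγclosed.1
  have hγ0q : γ 0 = γ q := hγclosed.2
  have hcGq : cG ∣ q := hcG.1 q ⟨hqpos, γ, hγclosed⟩
  have hγcw : IsWalk (CriticalEdge (mEdge A) (mWeight A)) q γ :=
    fun t ht => ⟨q, γ, t, hγcrit, ht, rfl, rfl⟩
  obtain ⟨γ', hγ'w, hγ'0, hγ'n⟩ := rotation hγcw hγ0q ht₀ hqpos
  have hqmemAt : q ∈ ClosedLengthsAt (CriticalEdge (mEdge A) (mWeight A)) kc :=
    ⟨hqpos, γ', hγ'w, by rw [hγ'0, hγt₀], by rw [hγ'n, hγt₀]⟩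
  have hdmaxq : dmax ∣ q := hkgcd.1 q hqmemAt
  have hdmax1 : 1 ≤ dmax := by
    rcases Nat.eq_zero_or_pos dmax with h | h
    · rw [h] at hdmaxq
      have := Nat.eq_zero_of_zero_dvd hdmaxq
      omega
    · exact h
  have hepG1 : ∀ (i : Fin N) (n : ℕ), cG ∣ n → epG ≤ n → HasClosedWalkAt (mEdge A) i n :=
    hepG.1
  -- the bound on muSet
  have hub : ∀ x ∈ muSet A (2 * cabDiameter (mEdge A) + epG + dmax + epmax),
      x ≤ 2 * W * (cabDiameter (mEdge A) : ℝ)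
        + (2 * (cabDiameter (mEdge A) : ℝ) + (epG : ℝ) + (q : ℝ)) * (2 * W) := by
    rintro x ⟨i, j, k, n, hn, a, b, ha, hb, rfl⟩
    have hn2 : 2 * cabDiameter (mEdge A) + epG ≤ n := by omega
    -- upper bound on a
    obtain ⟨pa, hpaw, hpa0, hpan, hpawt⟩ := pow_eq_weight ha
    have hupper : a ≤ rate (mEdge A) (mWeight A) * n + 2 * W * (cabDiameter (mEdge A) : ℝ) := by
      have h1 := walk_weight_upper (D := (cabDiameter (mEdge A) : ℝ)) hW hρub hρlb hmean
        (fun m qq hq => by exact_mod_cast hsimple_le m qq hq) n pa hpaw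
      rw [hpawt] at h1
      exact h1
    -- lower bound on b via a constructed walk
    obtain ⟨pb, hpbw, hpb0, hpbn, -⟩ := pow_eq_weight hb
    obtain ⟨m₁, s₁0, hs₁w0, hs₁a, hs₁b⟩ := hSC i (γ 0)
    obtain ⟨ℓ₁, s₁, -, -, hs₁simple, hs₁0, hs₁e⟩ := hextract m₁ s₁0 hs₁w0
    obtain ⟨m₂, s₂0, hs₂w0, hs₂a, hs₂b⟩ := hSC (γ 0) j
    obtain ⟨ℓ₂, s₂, -, -, hs₂simple, hs₂0, hs₂e⟩ := hextract m₂ s₂0 hs₂w0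
    have hℓ₁D : ℓ₁ ≤ cabDiameter (mEdge A) := hsimple_le _ _ hs₁simple
    have hℓ₂D : ℓ₂ ≤ cabDiameter (mEdge A) := hsimple_le _ _ hs₂simple
    -- congruence mod cG
    obtain ⟨mr, r, hrw, hr0, hre⟩ := hSC j i
    have hjoin0 : pb n = r 0 := by rw [hpbn, hr0]
    have hdvd1 : cG ∣ n + mr :=
      hdvdclosed _ (cat n pb r) (cat_walk hpbw hrw hjoin0)
        (by rw [cat_zero hjoin0, hpb0, cat_last, hre])
    have hs12join : s₁ ℓ₁ = s₂ 0 := by rw [hs₁e, hs₁b, hs₂0, hs₂a]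
    have hw12 : IsWalk (mEdge A) (ℓ₁ + ℓ₂) (cat ℓ₁ s₁ s₂) :=
      cat_walk hs₁simple.1 hs₂simple.1 hs12join
    have hjoin1 : cat ℓ₁ s₁ s₂ (ℓ₁ + ℓ₂) = r 0 := by rw [cat_last, hs₂e, hs₂b, hr0]
    have hdvd2 : cG ∣ (ℓ₁ + ℓ₂) + mr :=
      hdvdclosed _ (cat (ℓ₁ + ℓ₂) (cat ℓ₁ s₁ s₂) r) (cat_walk hw12 hrw hjoin1)
        (by rw [cat_zero hjoin1, cat_zero hs12join, hs₁0, hs₁a, cat_last, hre])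
    have hℓn : ℓ₁ + ℓ₂ ≤ n := by omega
    have hdvd3 : cG ∣ n - (ℓ₁ + ℓ₂) := by
      have h1 := Nat.dvd_sub hdvd1 hdvd2
      have h2 : n + mr - ((ℓ₁ + ℓ₂) + mr) = n - (ℓ₁ + ℓ₂) := by omega
      rwa [h2] at h1
    have hr'ge : epG ≤ n - (ℓ₁ + ℓ₂) := by omega
    obtain ⟨s, t, hst, htlt⟩ : ∃ s t, n - (ℓ₁ + ℓ₂) - epG = s * q + t ∧ t < q :=
      ⟨(n - (ℓ₁ + ℓ₂) - epG) / q, (n - (ℓ₁ + ℓ₂) - epG) % q,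
        by rw [mul_comm]; exact (Nat.div_add_mod _ _).symm, Nat.mod_lt _ hqpos⟩
    have hdvde : cG ∣ epG + t := by
      have h1 : cG ∣ s * q := Dvd.dvd.mul_left hcGq s
      have h2 : epG + t = (n - (ℓ₁ + ℓ₂)) - s * q := by omega
      rw [h2]
      exact Nat.dvd_sub hdvd3 h1
    obtain ⟨pe', hpe'w, hpe'0, hpe'e⟩ := hepG1 (γ 0) (epG + t) hdvde (by omega)
    obtain ⟨pγ, hpγw, hpγ0, hpγe, hpγwt⟩ := repeat_closed (w := mWeight A) hγwalk hγ0q s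
    -- assemble the walk
    have hj1 : s₁ ℓ₁ = pe' 0 := by rw [hs₁e, hs₁b, hpe'0]
    have hW1w : IsWalk (mEdge A) (ℓ₁ + (epG + t)) (cat ℓ₁ s₁ pe') :=
      cat_walk hs₁simple.1 hpe'w hj1
    have hj2 : cat ℓ₁ s₁ pe' (ℓ₁ + (epG + t)) = pγ 0 := by rw [cat_last, hpe'e, hpγ0]
    have hW2w : IsWalk (mEdge A) ((ℓ₁ + (epG + t)) + s * q)
        (cat (ℓ₁ + (epG + t)) (cat ℓ₁ s₁ pe') pγ) := cat_walk hW1w hpγw hj2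
    have hj3 : cat (ℓ₁ + (epG + t)) (cat ℓ₁ s₁ pe') pγ ((ℓ₁ + (epG + t)) + s * q)
        = s₂ 0 := by rw [cat_last, hpγe, hs₂0, hs₂a]
    have hW3w : IsWalk (mEdge A) (((ℓ₁ + (epG + t)) + s * q) + ℓ₂)
        (cat ((ℓ₁ + (epG + t)) + s * q) (cat (ℓ₁ + (epG + t)) (cat ℓ₁ s₁ pe') pγ) s₂) :=
      cat_walk hW2w hs₂simple.1 hj3
    have hlen : ((ℓ₁ + (epG + t)) + s * q) + ℓ₂ = n := by omega
    have hW30 : cat ((ℓ₁ + (epG + t)) + s * q) (cat (ℓ₁ + (epG + t)) (cat ℓ₁ s₁ pe') pγ) s₂ 0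
        = i := by
      rw [cat_zero hj3, cat_zero hj2, cat_zero hj1, hs₁0, hs₁a]
    have hW3n : cat ((ℓ₁ + (epG + t)) + s * q) (cat (ℓ₁ + (epG + t)) (cat ℓ₁ s₁ pe') pγ) s₂
        (((ℓ₁ + (epG + t)) + s * q) + ℓ₂) = j := by
      rw [cat_last, hs₂e, hs₂b]
    have hwt3 : walkWeight (mWeight A) (((ℓ₁ + (epG + t)) + s * q) + ℓ₂)
        (cat ((ℓ₁ + (epG + t)) + s * q) (cat (ℓ₁ + (epG + t)) (cat ℓ₁ s₁ pe') pγ) s₂)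
        = walkWeight (mWeight A) ℓ₁ s₁ + walkWeight (mWeight A) (epG + t) pe'
          + (s : ℝ) * (rate (mEdge A) (mWeight A) * q) + walkWeight (mWeight A) ℓ₂ s₂ := by
      rw [cat_weight hj3, cat_weight hj2, cat_weight hj1, hpγwt, hγw]
    rw [hlen] at hwt3
    have h1 := weight_le_pow (A := A) hW3w
    rw [hW30, hW3n, hlen, hb] at h1
    have hble2 : walkWeight (mWeight A) n
        (cat ((ℓ₁ + (epG + t)) + s * q) (cat (ℓ₁ + (epG + t)) (cat ℓ₁ s₁ pe') pγ) s₂)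
        ≤ b := by exact_mod_cast h1
    rw [hwt3] at hble2
    -- now the real-number computation
    have hb1 := (abs_le.1 (walkWeight_abs_le W hW ℓ₁ s₁)).1
    have hb2 := (abs_le.1 (walkWeight_abs_le W hW (epG + t) pe')).1
    have hb3 := (abs_le.1 (walkWeight_abs_le W hW ℓ₂ s₂)).1
    have hcastn : (n : ℝ) = (ℓ₁ : ℝ) + ((epG : ℝ) + (t : ℝ)) + (s : ℝ) * (q : ℝ) + (ℓ₂ : ℝ) := by
      exact_mod_cast (congrArg (fun x : ℕ => (x : ℝ)) hlen).symm
    have hS1 : (ℓ₁ : ℝ) ≤ (cabDiameter (mEdge A) : ℝ) := by exact_mod_cast hℓ₁D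
    have hS2 : (ℓ₂ : ℝ) ≤ (cabDiameter (mEdge A) : ℝ) := by exact_mod_cast hℓ₂D
    have hS3 : (t : ℝ) ≤ (q : ℝ) := by exact_mod_cast le_of_lt htlt
    have hS0 : (0:ℝ) ≤ (ℓ₁ : ℝ) + ((epG : ℝ) + (t : ℝ)) + (ℓ₂ : ℝ) := by positivity
    have hring : rate (mEdge A) (mWeight A) * (n : ℝ)
        = rate (mEdge A) (mWeight A) * ((ℓ₁ : ℝ) + ((epG : ℝ) + (t : ℝ)) + (ℓ₂ : ℝ))
          + (s : ℝ) * (rate (mEdge A) (mWeight A) * (q : ℝ)) := by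
      rw [hcastn]; ring
    have hmul1 : rate (mEdge A) (mWeight A) * ((ℓ₁ : ℝ) + ((epG : ℝ) + (t : ℝ)) + (ℓ₂ : ℝ))
        ≤ W * ((ℓ₁ : ℝ) + ((epG : ℝ) + (t : ℝ)) + (ℓ₂ : ℝ)) :=
      mul_le_mul_of_nonneg_right hρub hS0
    have hmul2 : W * ((ℓ₁ : ℝ) + ((epG : ℝ) + (t : ℝ)) + (ℓ₂ : ℝ))
        ≤ W * (2 * (cabDiameter (mEdge A) : ℝ) + (epG : ℝ) + (q : ℝ)) :=
      mul_le_mul_of_nonneg_left (by linarith) hW0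
    have hmul3 : W * ((ℓ₁ : ℝ) + ((epG : ℝ) + (t : ℝ)) + (ℓ₂ : ℝ)) ≥ 0 := by positivity
    -- (ℓ₁+e+ℓ₂)*W ≤ W*(2D+epG+q) as well
    have hmul4 : ((ℓ₁ : ℝ) + ((epG : ℝ) + (t : ℝ)) + (ℓ₂ : ℝ)) * W
        ≤ (2 * (cabDiameter (mEdge A) : ℝ) + (epG : ℝ) + (q : ℝ)) * W := by
      apply mul_le_mul_of_nonneg_right _ hW0
      linarith
    -- combine
    have hcast1 : ((ℓ₁ : ℕ) : ℝ) * W = (ℓ₁ : ℝ) * W := rfl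
    have hetot : ((epG + t : ℕ) : ℝ) = (epG : ℝ) + (t : ℝ) := by push_cast; ring
    rw [hetot] at hb2
    linarith [hupper, hble2, hb1, hb2, hb3, hring, hmul1, hmul2, hmul4]
  refine ⟨⟨_, hub⟩, ?_⟩
  intro nA nAv hnA hnAv
  -- key property of μ
  have hL11 : ∀ (j : Fin N) (n : ℕ) (i : Fin N) (b : ℝ),
      2 * cabDiameter (mEdge A) + epG + dmax + epmax ≤ n + 1 →
      mpPow A n i j = (b : WithBot ℝ) →
      mpSystem A (fun k => if k = j then (0 : ℝ)
        else - sSup (muSet A (2 * cabDiameter (mEdge A) + epG + dmax + epmax))) n i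
        = (b : WithBot ℝ) := by
    intro j n i b hn hb
    simp only [mpSystem, mpVec]
    apply le_antisymm
    · apply Finset.sup_le
      intro k _
      by_cases hkj : k = j
      · subst hkj
        rw [hb, if_pos rfl]
        simp
      · rw [if_neg hkj]
        rcases eq_or_ne (mpPow A n i k) ⊥ with h' | h'
        · rw [h', WithBot.bot_add]
          exact bot_le
        · obtain ⟨a, ha⟩ := WithBot.ne_bot_iff_exists.1 h'
          have hmem : a - b ∈ muSet A (2 * cabDiameter (mEdge A) + epG + dmax + epmax) :=
            ⟨i, j, k, n, hn, a, b, ha.symm, hb, rfl⟩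
          have hle : a - b ≤ sSup (muSet A (2 * cabDiameter (mEdge A) + epG + dmax + epmax)) :=
            le_csSup ⟨_, hub⟩ hmem
          rw [← ha, ← WithBot.coe_add]
          exact WithBot.coe_le_coe.2 (by push_cast; linarith)
    · have heq : mpPow A n i j + (((if j = j then (0:ℝ)
          else - sSup (muSet A (2 * cabDiameter (mEdge A) + epG + dmax + epmax))) : ℝ)
            : WithBot ℝ) = (b : WithBot ℝ) := by
        rw [if_pos rfl, hb]
        simp
      calc (b : WithBot ℝ) = _ := heq.symm
        _ ≤ _ := Finset.le_sup (f := fun k => mpPow A n i k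
            + (((if k = j then (0:ℝ)
              else - sSup (muSet A (2 * cabDiameter (mEdge A) + epG + dmax + epmax))) : ℝ)
                : WithBot ℝ)) (Finset.mem_univ j)
  -- periods
  obtain ⟨p₀, hp₀pos, hp₀⟩ := hnA.1
  choose pj hpjpos hpjper using fun j => (hnAv j).1
  have hPpos : 0 < ∏ j : Fin N, pj j := Finset.prod_pos fun j _ => hpjpos j
  set p := (nA + epG + 1) * (cG * (p₀ * ∏ j : Fin N, pj j)) with hpdef
  have hppos : 0 < p :=
    Nat.mul_pos (by omega) (Nat.mul_pos hcGpos (Nat.mul_pos hp₀pos hPpos))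
  have hple : nA + epG + 1 ≤ p :=
    Nat.le_mul_of_pos_right _ (Nat.mul_pos hcGpos (Nat.mul_pos hp₀pos hPpos))
  have hcGp : cG ∣ p := ⟨(nA + epG + 1) * (p₀ * ∏ j : Fin N, pj j), by rw [hpdef]; ring⟩
  have hp₀p : p₀ ∣ p := ⟨(nA + epG + 1) * (cG * ∏ j : Fin N, pj j), by rw [hpdef]; ring⟩
  have hpjp : ∀ j, pj j ∣ p := fun j =>
    (Finset.dvd_prod_of_mem pj (Finset.mem_univ j)).trans
      ⟨(nA + epG + 1) * (cG * p₀), by rw [hpdef]; ring⟩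
  -- iterated periodicity
  have hmatp : ∀ n, nA ≤ n → ∀ i j, mpPow A (n + p) i j
      = mpPow A n i j + (((p : ℝ) * rate (mEdge A) (mWeight A) : ℝ) : WithBot ℝ) := by
    intro n hn i j
    have h1 : mpPow A (n + (p / p₀) * p₀) i j = mpPow A n i j
        + ((((p / p₀ : ℕ) : ℝ) * ((p₀ : ℝ) * rate (mEdge A) (mWeight A)) : ℝ) : WithBot ℝ) :=
      iterate_periodic (fun m => mpPow A m i j) nA p₀
        ((p₀ : ℝ) * rate (mEdge A) (mWeight A)) (fun m hm => hp₀ m hm i j) (p / p₀) n hn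
    rw [Nat.div_mul_cancel hp₀p] at h1
    rw [h1]
    congr 2
    have h2 : ((p / p₀ : ℕ) : ℝ) * (p₀ : ℝ) = (p : ℝ) := by
      exact_mod_cast congrArg (fun x : ℕ => (x : ℝ)) (Nat.div_mul_cancel hp₀p)
    calc ((p / p₀ : ℕ) : ℝ) * ((p₀ : ℝ) * rate (mEdge A) (mWeight A))
        = (((p / p₀ : ℕ) : ℝ) * (p₀ : ℝ)) * rate (mEdge A) (mWeight A) := by ring
      _ = (p : ℝ) * rate (mEdge A) (mWeight A) := by rw [h2]
  have hsysp : ∀ (j : Fin N) (n : ℕ), nAv j ≤ n → ∀ i,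
      mpSystem A (fun k => if k = j then (0 : ℝ)
        else - sSup (muSet A (2 * cabDiameter (mEdge A) + epG + dmax + epmax))) (n + p) i
      = mpSystem A (fun k => if k = j then (0 : ℝ)
        else - sSup (muSet A (2 * cabDiameter (mEdge A) + epG + dmax + epmax))) n i
        + (((p : ℝ) * rate (mEdge A) (mWeight A) : ℝ) : WithBot ℝ) := by
    intro j n hn i
    have h1 : mpSystem A (fun k => if k = j then (0 : ℝ)
        else - sSup (muSet A (2 * cabDiameter (mEdge A) + epG + dmax + epmax)))
          (n + (p / pj j) * pj j) i
        = mpSystem A (fun k => if k = j then (0 : ℝ)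
        else - sSup (muSet A (2 * cabDiameter (mEdge A) + epG + dmax + epmax))) n i
        + ((((p / pj j : ℕ) : ℝ) * ((pj j : ℝ) * rate (mEdge A) (mWeight A)) : ℝ) : WithBot ℝ) :=
      iterate_periodic (fun m => mpSystem A (fun k => if k = j then (0 : ℝ)
        else - sSup (muSet A (2 * cabDiameter (mEdge A) + epG + dmax + epmax))) m i)
        (nAv j) (pj j) ((pj j : ℝ) * rate (mEdge A) (mWeight A))
        (fun m hm => hpjper j m hm i) (p / pj j) n hn
    rw [Nat.div_mul_cancel (hpjp j)] at h1
    rw [h1]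
    congr 2
    have h2 : ((p / pj j : ℕ) : ℝ) * (pj j : ℝ) = (p : ℝ) := by
      exact_mod_cast congrArg (fun x : ℕ => (x : ℝ)) (Nat.div_mul_cancel (hpjp j))
    calc ((p / pj j : ℕ) : ℝ) * ((pj j : ℝ) * rate (mEdge A) (mWeight A))
        = (((p / pj j : ℕ) : ℝ) * (pj j : ℝ)) * rate (mEdge A) (mWeight A) := by ring
      _ = (p : ℝ) * rate (mEdge A) (mWeight A) := by rw [h2]
  -- the matrix transient membership
  have hMmem : max (2 * cabDiameter (mEdge A) + epG + dmax + epmax - 1)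
      (Finset.univ.sup nAv) ∈ MatTransientSet A := by
    refine ⟨p, hppos, ?_⟩
    intro n hn i j
    have hn1 : 2 * cabDiameter (mEdge A) + epG + dmax + epmax - 1 ≤ n :=
      le_trans (le_max_left _ _) hn
    have hnB : 2 * cabDiameter (mEdge A) + epG + dmax + epmax ≤ n + 1 := by omega
    have hnAvj : ∀ j', nAv j' ≤ n := fun j' =>
      le_trans (le_trans (Finset.le_sup (Finset.mem_univ j')) (le_max_right _ _)) hn
    by_cases hcase : nA ≤ n
    · exact hmatp n hcase i j
    · rcases eq_or_ne (mpPow A n i j) ⊥ with hbot | hne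
      · rw [hbot, WithBot.bot_add]
        by_contra hne'
        obtain ⟨b', hb'⟩ := WithBot.ne_bot_iff_exists.1 hne'
        obtain ⟨pw, hpw, hpw0, hpwn, -⟩ := pow_eq_weight hb'.symm
        obtain ⟨ℓ, ps, hℓle, hdv, hsimp, hps0, hpsn⟩ := hextract (n + p) pw hpw
        have hℓD : ℓ ≤ cabDiameter (mEdge A) := hsimple_le _ _ hsimp
        have hdv2 : cG ∣ n - ℓ := by
          have h1 := Nat.dvd_sub hdv hcGp
          have h2 : n + p - ℓ - p = n - ℓ := by omega
          rwa [h2] at h1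
        obtain ⟨pc, hpcw, hpc0, hpce⟩ := hepG1 j (n - ℓ) hdv2 (by omega)
        have hjoin : ps ℓ = pc 0 := by rw [hpsn, hpwn, hpc0]
        have hwlk : IsWalk (mEdge A) (ℓ + (n - ℓ)) (cat ℓ ps pc) :=
          cat_walk hsimp.1 hpcw hjoin
        have hlen2 : ℓ + (n - ℓ) = n := by omega
        rw [hlen2] at hwlk
        have hne2 := pow_ne_bot_of_walk hwlk
        rw [cat_zero hjoin, hps0, hpw0] at hne2
        have hend : cat ℓ ps pc n = j := by rw [← hlen2, cat_last, hpce]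
        rw [hend] at hne2
        exact hne2 hbot
      · obtain ⟨b, hb⟩ := WithBot.ne_bot_iff_exists.1 hne
        obtain ⟨pw, hpw, hpw0, hpwn, -⟩ := pow_eq_weight hb.symm
        obtain ⟨pc, hpcw, hpc0, hpce⟩ := hepG1 j p hcGp (by omega)
        have hjoin : pw n = pc 0 := by rw [hpwn, hpc0]
        have hwlk := cat_walk hpw hpcw hjoin
        have hne2 := pow_ne_bot_of_walk hwlk
        rw [cat_zero hjoin, hpw0] at hne2
        have hend : cat n pw pc (n + p) = j := by rw [cat_last, hpce]
        rw [hend] at hne2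
        obtain ⟨b', hb'⟩ := WithBot.ne_bot_iff_exists.1 hne2
        have h1 := hL11 j n i b hnB hb.symm
        have h2 := hL11 j (n + p) i b' (by omega) hb'.symm
        have h3 := hsysp j n (hnAvj j) i
        rw [h1, h2] at h3
        rw [← hb, ← hb']
        exact h3
  have hfin : nA ≤ max (2 * cabDiameter (mEdge A) + epG + dmax + epmax - 1)
      (Finset.univ.sup nAv) := hnA.2 hMmem
  rcases le_max_iff.mp hfin with hx | hx
  · refine le_max_iff.mpr (Or.inl ?_)
    have h1 : (nA : ℤ) ≤ (2 * cabDiameter (mEdge A) + epG + dmax + epmax - 1 : ℕ) := by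
      exact_mod_cast hx
    omega
  · exact le_max_iff.mpr (Or.inr (by exact_mod_cast hx))


end Transients
end

section
/- Let G be a nontrivial strongly connected edge-weighted graph with N nodes whose edge weights are all integers, and assume G contains a nonempty closed path having no critical node (so that ρ_nc(G) ∈ ℝ). Let N_nc be the number of non-critical nodes of G. Then ρ(G) − ρ_nc(G) ≥ 1/((N − N_nc)·N_nc) ≥ 4/N². -/
namespace Transients

variable {V : Type*}

section Aux19

variable (E : V → V → Prop) (w : V → V → ℝ)

lemma walkWeight_succ' (n : ℕ) (p : ℕ → V) :
    walkWeight w (n + 1) p = walkWeight w n p + w (p n) (p (n + 1)) :=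
  Finset.sum_range_succ _ _

lemma walkWeight_int' (hint : ∀ i j, E i j → ∃ z : ℤ, w i j = (z : ℝ)) :
    ∀ n p, IsWalk E n p → ∃ z : ℤ, walkWeight w n p = (z : ℝ) := by
  intro n
  induction n with
  | zero => exact fun p _ => ⟨0, by simp [walkWeight]⟩
  | succ n ih =>
    intro p hw
    obtain ⟨z, hz⟩ := ih p (fun k hk => hw k (by omega))
    obtain ⟨z', hz'⟩ := hint _ _ (hw n (by omega))
    exact ⟨z + z', by rw [walkWeight_succ', hz, hz']; push_cast; ring⟩

/-- Every nonempty closed walk admits an elementary closed walk, on nodes of the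
original walk, with at least the same mean weight. -/
lemma exists_elem_walk : ∀ n, 0 < n → ∀ p, IsClosedWalk E n p →
    ∃ m q, IsElemClosedWalk E m q ∧ (∀ k, k ≤ m → ∃ k', k' ≤ n ∧ q k = p k') ∧
      walkWeight w n p / n ≤ walkWeight w m q / m := by
  intro n
  induction n using Nat.strong_induction_on with
  | _ n ih =>
    intro hn p hc
    by_cases hrep : ∀ k l, k < n → l < n → p k = p l → k = l
    · exact ⟨n, p, ⟨hn, hc, hrep⟩, fun k hk => ⟨k, hk, rfl⟩, le_rfl⟩
    push_neg at hrep
    obtain ⟨k, l, hkl, hkn, hln, hpe⟩ : ∃ k l, k < l ∧ k < n ∧ l < n ∧ p k = p l := by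
      obtain ⟨k, l, hkn, hln, hpe, hne⟩ := hrep
      rcases lt_or_gt_of_ne hne with h | h
      exacts [⟨k, l, h, hkn, hln, hpe⟩, ⟨l, k, h, hln, hkn, hpe.symm⟩]
    set m1 := l - k with hm1def
    set m2 := n - m1 with hm2def
    have hm1 : 0 < m1 := by omega
    have hm1n : m1 < n := by omega
    have hm2 : 0 < m2 := by omega
    have hm2n : m2 < n := by omega
    have hkm1 : k + m1 = l := by omega
    have hm2k : k < m2 := by omega
    set q1 : ℕ → V := fun t => p (k + t) with hq1def
    set q2 : ℕ → V := fun t => p (if t ≤ k then t else t + m1) with hq2def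
    have hq1w : IsClosedWalk E m1 q1 := by
      constructor
      · intro t ht
        have he := hc.1 (k + t) (by omega)
        have : k + (t + 1) = k + t + 1 := by omega
        simpa [hq1def, this] using he
      · show p (k + 0) = p (k + m1)
        rw [hkm1]; simpa using hpe
    have hq2w : IsClosedWalk E m2 q2 := by
      constructor
      · intro t ht
        show E (p (if t ≤ k then t else t + m1)) (p (if t + 1 ≤ k then t + 1 else t + 1 + m1))
        rcases Nat.lt_trichotomy t k with h1 | h1 | h1
        · rw [if_pos h1.le, if_pos (show t + 1 ≤ k by omega)]
          exact hc.1 t (by omega)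
        · subst h1
          rw [if_pos le_rfl, if_neg (show ¬ (t + 1 ≤ t) by omega), hpe]
          have : t + 1 + m1 = l + 1 := by omega
          rw [this]
          exact hc.1 l hln
        · rw [if_neg (show ¬ (t ≤ k) by omega), if_neg (show ¬ (t + 1 ≤ k) by omega)]
          have : t + 1 + m1 = t + m1 + 1 := by omega
          rw [this]
          exact hc.1 (t + m1) (by omega)
      · show p (if 0 ≤ k then 0 else 0 + m1) = p (if m2 ≤ k then m2 else m2 + m1)
        rw [if_pos (Nat.zero_le _), if_neg (show ¬ (m2 ≤ k) by omega)]
        have : m2 + m1 = n := by omega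
        rw [this]; exact hc.2
    set f : ℕ → ℝ := fun s => w (p s) (p (s + 1)) with hfdef
    have hsplit : walkWeight w n p = walkWeight w m1 q1 + walkWeight w m2 q2 := by
      have e1 : walkWeight w m1 q1 = ∑ s ∈ Finset.Ico k l, f s := by
        rw [Finset.sum_Ico_eq_sum_range]
        have : l - k = m1 := rfl
        rw [this]
        apply Finset.sum_congr rfl
        intro t _
        show w (p (k + t)) (p (k + (t + 1))) = w (p (k + t)) (p (k + t + 1))
        rw [Nat.add_assoc]
      have e2 : walkWeight w m2 q2 = (∑ s ∈ Finset.range k, f s) + ∑ s ∈ Finset.Ico l n, f s := by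
        have hsplit2 : walkWeight w m2 q2
            = (∑ t ∈ Finset.Ico 0 k, w (q2 t) (q2 (t + 1)))
              + ∑ t ∈ Finset.Ico k m2, w (q2 t) (q2 (t + 1)) := by
          rw [Finset.sum_Ico_consecutive _ (Nat.zero_le k) hm2k.le]
          rw [walkWeight, Finset.range_eq_Ico]
        rw [hsplit2]
        congr 1
        · rw [Finset.range_eq_Ico]
          apply Finset.sum_congr rfl
          intro t ht
          simp only [Finset.mem_Ico] at ht
          show w (p (if t ≤ k then t else t + m1)) (p (if t + 1 ≤ k then t + 1 else t + 1 + m1)) = f t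
          rw [if_pos (show t ≤ k by omega), if_pos (show t + 1 ≤ k by omega)]
        · have e3 : ∀ t ∈ Finset.Ico k m2, w (q2 t) (q2 (t + 1)) = f (t + m1) := by
            intro t ht
            simp only [Finset.mem_Ico] at ht
            show w (p (if t ≤ k then t else t + m1)) (p (if t + 1 ≤ k then t + 1 else t + 1 + m1))
              = w (p (t + m1)) (p (t + m1 + 1))
            have h4 : t + 1 + m1 = t + m1 + 1 := by omega
            rw [if_neg (show ¬ (t + 1 ≤ k) by omega), h4]
            rcases Nat.eq_or_lt_of_le ht.1 with h5 | h5
            · rw [if_pos h5.symm.le, ← h5, hpe, ← hkm1]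
            · rw [if_neg (show ¬ (t ≤ k) by omega)]
          rw [Finset.sum_congr rfl e3, Finset.sum_Ico_eq_sum_range,
            Finset.sum_Ico_eq_sum_range]
          have h6 : m2 - k = n - l := by omega
          rw [h6]
          apply Finset.sum_congr rfl
          intro t _
          have : k + t + m1 = l + t := by omega
          rw [this]
      have e0 : walkWeight w n p = ∑ s ∈ Finset.range n, f s := rfl
      rw [e0, e1, e2, Finset.range_eq_Ico,
        ← Finset.sum_Ico_consecutive f (Nat.zero_le l) hln.le,
        ← Finset.sum_Ico_consecutive f (Nat.zero_le k) hkl.le]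
      simp only [Finset.range_eq_Ico]
      ring
    have key : walkWeight w n p / n
        ≤ max (walkWeight w m1 q1 / m1) (walkWeight w m2 q2 / m2) := by
      set M := max (walkWeight w m1 q1 / m1) (walkWeight w m2 q2 / m2) with hM
      have h1 : walkWeight w m1 q1 ≤ M * m1 := by
        have := le_max_left (walkWeight w m1 q1 / m1) (walkWeight w m2 q2 / m2)
        rw [div_le_iff₀ (by exact_mod_cast hm1)] at this
        exact this
      have h2 : walkWeight w m2 q2 ≤ M * m2 := by
        have := le_max_right (walkWeight w m1 q1 / m1) (walkWeight w m2 q2 / m2)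
        rw [div_le_iff₀ (by exact_mod_cast hm2)] at this
        exact this
      rw [div_le_iff₀ (by exact_mod_cast hn)]
      have hnm : (m1 : ℝ) + m2 = n := by
        have : m1 + m2 = n := by omega
        exact_mod_cast congrArg (Nat.cast : ℕ → ℝ) this
      calc walkWeight w n p = walkWeight w m1 q1 + walkWeight w m2 q2 := hsplit
        _ ≤ M * m1 + M * m2 := add_le_add h1 h2
        _ = M * n := by rw [← hnm]; ring
    rcases le_total (walkWeight w m1 q1 / m1) (walkWeight w m2 q2 / m2) with hcase | hcase
    · obtain ⟨m, q, he, hcont, hle⟩ := ih m2 hm2n hm2 q2 hq2w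
      refine ⟨m, q, he, ?_, ?_⟩
      · intro t ht
        obtain ⟨k', hk', hq⟩ := hcont t ht
        exact ⟨if k' ≤ k then k' else k' + m1, by split <;> omega, hq⟩
      · calc walkWeight w n p / n ≤ _ := key
          _ = walkWeight w m2 q2 / m2 := max_eq_right hcase
          _ ≤ _ := hle
    · obtain ⟨m, q, he, hcont, hle⟩ := ih m1 hm1n hm1 q1 hq1w
      refine ⟨m, q, he, ?_, ?_⟩
      · intro t ht
        obtain ⟨k', hk', hq⟩ := hcont t ht
        exact ⟨k + k', by omega, hq⟩
      · calc walkWeight w n p / n ≤ _ := key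
          _ = walkWeight w m1 q1 / m1 := max_eq_left hcase
          _ ≤ _ := hle

lemma elem_length_le [Fintype V] {n : ℕ} {p : ℕ → V} (h : IsElemClosedWalk E n p)
    (S : Set V) (hS : ∀ k, k < n → p k ∈ S) : n ≤ S.ncard := by
  classical
  have hfin : S.Finite := Set.toFinite S
  have hcard : (Finset.range n).card ≤ hfin.toFinset.card := by
    apply Finset.card_le_card_of_injOn p
    · intro a ha
      rw [Finset.mem_coe, Set.Finite.mem_toFinset]
      exact hS a (Finset.mem_range.mp ha)
    · intro a ha b hb hab
      exact h.2.2 a b (Finset.mem_range.mp ha) (Finset.mem_range.mp hb) hab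
  rwa [Finset.card_range, ← Set.ncard_eq_toFinset_card S hfin] at hcard

lemma T_finite' [Fintype V] :
    {x : ℝ | ∃ n p, IsElemClosedWalk E n p ∧ x = walkWeight w n p / n}.Finite := by
  classical
  set N := Fintype.card V with hN
  have hpos : 0 < N + 2 := by omega
  set f : Fin (N + 1) × (Fin (N + 2) → V) → ℝ := fun nq =>
    (∑ s ∈ Finset.range nq.1.val,
      w (nq.2 ⟨s % (N + 2), Nat.mod_lt _ hpos⟩) (nq.2 ⟨(s + 1) % (N + 2), Nat.mod_lt _ hpos⟩))
      / nq.1.val with hf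
  apply (Set.finite_range f).subset
  rintro x ⟨n, p, he, rfl⟩
  have hn : n ≤ N := by
    have := elem_length_le E he Set.univ (fun k _ => Set.mem_univ _)
    rwa [Set.ncard_univ, Nat.card_eq_fintype_card] at this
  refine ⟨(⟨n, by omega⟩, fun i => p i.val), ?_⟩
  simp only [hf, walkWeight]
  congr 1
  apply Finset.sum_congr rfl
  intro s hs
  rw [Finset.mem_range] at hs
  have h1 : s % (N + 2) = s := Nat.mod_eq_of_lt (by omega)
  have h2 : (s + 1) % (N + 2) = s + 1 := Nat.mod_eq_of_lt (by omega)
  show w (p (s % (N + 2))) (p ((s + 1) % (N + 2))) = w (p s) (p (s + 1))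
  rw [h1, h2]

lemma exists_greatest_of_finite {S : Set ℝ} (hf : S.Finite) (hne : S.Nonempty) :
    ∃ a, IsGreatest S a := by
  obtain ⟨a, haS, ha⟩ := Set.Finite.exists_maximalFor id S hf hne
  refine ⟨a, haS, fun b hb => ?_⟩
  rcases le_total b a with h | h
  · exact h
  · exact ha hb h

end Aux19

/-- For a nontrivial strongly connected edge-weighted graph with `N`
nodes, integer edge weights, and a nonempty closed path avoiding all critical nodes,
with `N_nc` the number of non-critical nodes:
`ρ(G) − ρ_nc(G) ≥ 1/((N − N_nc)·N_nc) ≥ 4/N²`. -/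
theorem stmt_19 {V : Type*} [Fintype V] (E : V → V → Prop) (wE : V → V → ℝ)
    (hnt : NontrivialGraph E) (hsc : StronglyConnected E)
    (hint : ∀ i j : V, E i j → ∃ z : ℤ, wE i j = (z : ℝ))
    (hnc : ∃ n p, 0 < n ∧ IsClosedWalk E n p ∧
      ∀ k, k ≤ n → ¬ CriticalNode E wE (p k)) :
    1 / (((Fintype.card V : ℝ) - ({i : V | ¬ CriticalNode E wE i}.ncard : ℝ)) *
        ({i : V | ¬ CriticalNode E wE i}.ncard : ℝ)) ≤ rate E wE - ncRate E wE ∧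
    4 / (Fintype.card V : ℝ) ^ 2 ≤
      1 / (((Fintype.card V : ℝ) - ({i : V | ¬ CriticalNode E wE i}.ncard : ℝ)) *
        ({i : V | ¬ CriticalNode E wE i}.ncard : ℝ)) := by
  classical
  set Crit : Set V := {i : V | CriticalNode E wE i} with hCrit
  set NC : Set V := {i : V | ¬ CriticalNode E wE i} with hNC
  obtain ⟨n₀, p₀, hn₀, hc₀, hncrit₀⟩ := hnc
  obtain ⟨m₀, q₀, he₀, hcont₀, hle₀⟩ := exists_elem_walk E wE n₀ hn₀ p₀ hc₀
  have hq₀nc : ∀ k, k ≤ m₀ → ¬ CriticalNode E wE (q₀ k) := by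
    intro k hk
    obtain ⟨k', hk', hq⟩ := hcont₀ k hk
    rw [hq]; exact hncrit₀ k' hk'
  set T : Set ℝ := {x | ∃ n p, IsElemClosedWalk E n p ∧ x = walkWeight wE n p / n} with hT
  set Tnc : Set ℝ := {x | ∃ n p, IsElemClosedWalk E n p ∧
    (∀ k, k ≤ n → ¬ CriticalNode E wE (p k)) ∧ x = walkWeight wE n p / n} with hTnc
  have hTfin : T.Finite := T_finite' E wE
  have hTncfin : Tnc.Finite := hTfin.subset (by rintro x ⟨n, p, he, -, rfl⟩; exact ⟨n, p, he, rfl⟩)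
  have hTne : T.Nonempty := ⟨_, m₀, q₀, he₀, rfl⟩
  have hTncne : Tnc.Nonempty := ⟨_, m₀, q₀, he₀, hq₀nc, rfl⟩
  obtain ⟨Mx, hMxT, hMxub⟩ := exists_greatest_of_finite hTfin hTne
  obtain ⟨Mn, hMnT, hMnub⟩ := exists_greatest_of_finite hTncfin hTncne
  have hrateG : IsGreatest
      {x : ℝ | ∃ n p, 0 < n ∧ IsClosedWalk E n p ∧ x = walkWeight wE n p / n} Mx := by
    constructor
    · obtain ⟨n, p, he, hx⟩ := hMxT
      exact ⟨n, p, he.1, he.2.1, hx⟩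
    · rintro x ⟨n, p, hn, hcw, rfl⟩
      obtain ⟨m, q, he, -, hle⟩ := exists_elem_walk E wE n hn p hcw
      exact hle.trans (hMxub ⟨m, q, he, rfl⟩)
  have hrate : rate E wE = Mx := hrateG.csSup_eq
  have hncG : IsGreatest {x : ℝ | ∃ n p, 0 < n ∧ IsClosedWalk E n p ∧
      (∀ k, k ≤ n → ¬ CriticalNode E wE (p k)) ∧ x = walkWeight wE n p / n} Mn := by
    constructor
    · obtain ⟨n, p, he, hnc', hx⟩ := hMnT
      exact ⟨n, p, he.1, he.2.1, hnc', hx⟩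
    · rintro x ⟨n, p, hn, hcw, hncw, rfl⟩
      obtain ⟨m, q, he, hcont, hle⟩ := exists_elem_walk E wE n hn p hcw
      refine hle.trans (hMnub ⟨m, q, he, ?_, rfl⟩)
      intro k hk
      obtain ⟨k', hk', hq⟩ := hcont k hk
      rw [hq]; exact hncw k' hk'
  have hncrate : ncRate E wE = Mn := hncG.csSup_eq
  obtain ⟨na, pa, hea, hMa⟩ := hMxT
  obtain ⟨nb, pb, heb, hncb, hMb⟩ := hMnT
  have hna : 0 < na := hea.1
  have hnb : 0 < nb := heb.1
  have hnaR : (0 : ℝ) < na := by exact_mod_cast hna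
  have hnbR : (0 : ℝ) < nb := by exact_mod_cast hnb
  have hacrit : IsCriticalWalk E wE na pa := by
    refine ⟨hea.1, hea.2.1, ?_⟩
    rw [hrate, hMa, div_mul_cancel₀ _ hnaR.ne']
  have hpaC : ∀ k, k < na → pa k ∈ Crit := fun k hk => ⟨na, pa, k, hacrit, hk.le, rfl⟩
  have hnaC : na ≤ Crit.ncard := elem_length_le E hea Crit hpaC
  have hpbNC : ∀ k, k < nb → pb k ∈ NC := fun k hk => hncb k hk.le
  have hnbNC : nb ≤ NC.ncard := elem_length_le E heb NC hpbNC
  obtain ⟨a, ha⟩ := walkWeight_int' E wE hint na pa hea.2.1.1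
  obtain ⟨b, hb⟩ := walkWeight_int' E wE hint nb pb heb.2.1.1
  have hMnle : Mn ≤ Mx := hrateG.2 ⟨nb, pb, hnb, heb.2.1, hMb⟩
  have hlt : Mn < Mx := by
    rcases hMnle.lt_or_eq with h | h
    · exact h
    · exfalso
      apply hncb 0 (Nat.zero_le _)
      exact ⟨nb, pb, 0, ⟨hnb, heb.2.1, by
        rw [hrate, ← h, hMb, div_mul_cancel₀ _ hnbR.ne']⟩, Nat.zero_le _, rfl⟩
  have haR : Mx = (a : ℝ) / na := by rw [hMa, ha]
  have hbR : Mn = (b : ℝ) / nb := by rw [hMb, hb]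
  have hposint : (1 : ℝ) ≤ (a : ℝ) * nb - (b : ℝ) * na := by
    have h1 : (b : ℝ) * na < (a : ℝ) * nb := by
      rw [haR, hbR, div_lt_div_iff₀ hnbR hnaR] at hlt
      exact hlt
    have h2 : b * (na : ℤ) < a * (nb : ℤ) := by exact_mod_cast h1
    have h3 : b * (na : ℤ) + 1 ≤ a * (nb : ℤ) := Int.add_one_le_iff.mpr h2
    have h4 : (b : ℝ) * na + 1 ≤ (a : ℝ) * nb := by exact_mod_cast h3
    linarith
  have hMdiff : 1 / ((na : ℝ) * nb) ≤ Mx - Mn := by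
    have hdiff : Mx - Mn = ((a : ℝ) * nb - (b : ℝ) * na) / ((na : ℝ) * nb) := by
      rw [haR, hbR]
      field_simp
    rw [hdiff]
    exact (div_le_div_iff_of_pos_right (by positivity)).mpr hposint
  have hNCpos : 0 < NC.ncard := lt_of_lt_of_le hnb hnbNC
  have hCpos : 0 < Crit.ncard := lt_of_lt_of_le hna hnaC
  have hcompl : Crit.ncard + NC.ncard = Fintype.card V := by
    have hNCc : NC = Critᶜ := by ext i; simp [hNC, hCrit]
    rw [hNCc, Set.ncard_add_ncard_compl, Nat.card_eq_fintype_card]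
  have hNsub : (Fintype.card V : ℝ) - (NC.ncard : ℝ) = (Crit.ncard : ℝ) := by
    rw [← hcompl]; push_cast; ring
  have h1 : (na : ℝ) ≤ (Crit.ncard : ℝ) := by exact_mod_cast hnaC
  have h2 : (nb : ℝ) ≤ (NC.ncard : ℝ) := by exact_mod_cast hnbNC
  constructor
  · rw [hrate, hncrate, hNsub]
    refine le_trans ?_ hMdiff
    exact one_div_le_one_div_of_le (by positivity)
      (mul_le_mul h1 h2 hnbR.le (le_trans hnaR.le h1))
  · rw [hNsub]
    have hC1 : (1 : ℝ) ≤ (Crit.ncard : ℝ) := by exact_mod_cast hCpos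
    have hN1 : (1 : ℝ) ≤ (NC.ncard : ℝ) := by exact_mod_cast hNCpos
    have hsum : (Crit.ncard : ℝ) + (NC.ncard : ℝ) = (Fintype.card V : ℝ) := by
      exact_mod_cast hcompl
    rw [div_le_div_iff₀ (by nlinarith) (by nlinarith)]
    nlinarith [sq_nonneg ((Crit.ncard : ℝ) - (NC.ncard : ℝ))]

end Transients
end
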